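/- For a simplicial group G, the simplicial map S_G : W̄G → Diag NG is a section of D_G : Diag NG → W̄G, i.e., (S_G)_n (D_G)_n = id_{W̄_n G} for all n. In particular D_G is a retraction of simplicial sets. -/

import Mathlib

namespace Paper

/-- clamped coface map `δ^k : [a] → [b]`. -/
def δOH (k a b : ℕ) : Fin (a+1) →o Fin (b+1) where
  toFun i := ⟨min (if (i:ℕ) < k then (i:ℕ) else (i:ℕ)+1) b, Nat.lt_succ_of_le (Nat.min_le_right _ _)⟩
  monotone' := by
    intro i j hij
    have h : (i:ℕ) ≤ (j:ℕ) := hij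
    simp only [Fin.mk_le_mk]
    split_ifs <;> omega

/-- clamped codegeneracy map `σ^k : [a] → [b]`. -/
def σOH (k a b : ℕ) : Fin (a+1) →o Fin (b+1) where
  toFun i := ⟨min (if (i:ℕ) ≤ k then (i:ℕ) else (i:ℕ)-1) b, Nat.lt_succ_of_le (Nat.min_le_right _ _)⟩
  monotone' := by
    intro i j hij
    have h : (i:ℕ) ≤ (j:ℕ) := hij
    simp only [Fin.mk_le_mk]
    split_ifs <;> omega

/-- `τ^k : [n] → [1]`, sending `[0, n-k]` to `0` and the rest to `1`. -/
def τOH (n k : ℕ) : Fin (n+1) →o Fin 2 where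
  toFun i := if (i:ℕ) + k ≤ n then 0 else 1
  monotone' := by
    intro i j hij
    have h : (i:ℕ) ≤ (j:ℕ) := hij
    dsimp only
    split_ifs with h1 h2 h3
    · exact le_refl _
    · exact Fin.zero_le _
    · exact absurd h3 (by omega)
    · exact le_refl _

/-- application of `θ : [m] → [n]` to a natural number (clamped). -/
def fApp {m n : ℕ} (θ : Fin (m+1) →o Fin (n+1)) (x : ℕ) : ℕ :=
  (θ ⟨min x m, Nat.lt_succ_of_le (Nat.min_le_right _ _)⟩ : Fin (n+1))

theorem fApp_mono {m n : ℕ} (θ : Fin (m+1) →o Fin (n+1)) {x y : ℕ} (h : x ≤ y) :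
    fApp θ x ≤ fApp θ y :=
  Fin.le_def.mp (θ.monotone (Fin.mk_le_mk.mpr (by omega)))

theorem fApp_le {m n : ℕ} (θ : Fin (m+1) →o Fin (n+1)) (x : ℕ) : fApp θ x ≤ n :=
  Nat.lt_succ_iff.mp (Fin.isLt _)

theorem fApp_coe {m n : ℕ} (θ : Fin (m+1) →o Fin (n+1)) (p : Fin (m+1)) :
    fApp θ (p:ℕ) = (θ p : ℕ) := by
  have hp : (⟨min (p:ℕ) m, Nat.lt_succ_of_le (Nat.min_le_right _ _)⟩ : Fin (m+1)) = p :=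
    Fin.ext (show min (p:ℕ) m = (p:ℕ) from by have := p.isLt; omega)
  unfold fApp
  rw [hp]

/-- `Spl_{≤ p}(θ) : [p] → [pθ]`. -/
def splLe {m n : ℕ} (θ : Fin (m+1) →o Fin (n+1)) (p : Fin (m+1)) :
    Fin ((p:ℕ)+1) →o Fin ((θ p : ℕ)+1) where
  toFun i := ⟨fApp θ (i:ℕ), by
    have h1 : fApp θ (i:ℕ) ≤ fApp θ (p:ℕ) := fApp_mono θ (by have := i.isLt; omega)
    have h2 : fApp θ (p:ℕ) = (θ p : ℕ) := fApp_coe θ p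
    omega⟩
  monotone' := by
    intro a b hab
    have h : (a:ℕ) ≤ (b:ℕ) := hab
    simp only [Fin.mk_le_mk]
    exact fApp_mono θ h

/-- `Spl_{≥ p}(θ) : [m-p] → [n-pθ]`. -/
def splGe {m n : ℕ} (θ : Fin (m+1) →o Fin (n+1)) (p : Fin (m+1)) :
    Fin (m - (p:ℕ) + 1) →o Fin (n - (θ p : ℕ) + 1) where
  toFun i := ⟨fApp θ ((i:ℕ) + (p:ℕ)) - (θ p : ℕ), by
    have h1 : fApp θ ((i:ℕ) + (p:ℕ)) ≤ n := fApp_le θ _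
    omega⟩
  monotone' := by
    intro a b hab
    have h : (a:ℕ) ≤ (b:ℕ) := hab
    simp only [Fin.mk_le_mk]
    have := fApp_mono θ (show (a:ℕ) + (p:ℕ) ≤ (b:ℕ) + (p:ℕ) by omega)
    omega

/-- the restriction `θ|_[i]^[j] : [i] → [j]` of `θ` (clamped). -/
def restrictOH {m n : ℕ} (θ : Fin (m+1) →o Fin (n+1)) (i j : ℕ) : Fin (i+1) →o Fin (j+1) where
  toFun k := ⟨min (fApp θ (k:ℕ)) j, Nat.lt_succ_of_le (Nat.min_le_right _ _)⟩
  monotone' := by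
    intro a b hab
    have h : (a:ℕ) ≤ (b:ℕ) := hab
    simp only [Fin.mk_le_mk]
    have := fApp_mono θ h
    omega

/-- ascending product `f a * f (a+1) * ⋯ * f (b-1)`. -/
def aProd {γ : Type*} [Monoid γ] (f : ℕ → γ) (a : ℕ) : ℕ → γ
  | 0 => 1
  | b+1 => if a ≤ b then aProd f a b * f b else 1

/-- descending product `f (b-1) * f (b-2) * ⋯ * f a`. -/
def dProd {γ : Type*} [Monoid γ] (f : ℕ → γ) (a : ℕ) : ℕ → γ
  | 0 => 1
  | b+1 => if a ≤ b then f b * dProd f a b else 1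

end Paper
namespace Paper

/-- A simplicial group, given by levels, structure maps, functoriality,
and levelwise multiplicativity. -/
structure SGrp where
  obj : ℕ → Type
  grp : ∀ n, Group (obj n)
  map : ∀ {m n : ℕ}, (Fin (m+1) →o Fin (n+1)) → obj n → obj m
  map_id : ∀ {n : ℕ} (x : obj n), map OrderHom.id x = x
  map_comp : ∀ {l m n : ℕ} (α : Fin (l+1) →o Fin (m+1)) (β : Fin (m+1) →o Fin (n+1)) (x : obj n),
    map α (map β x) = map (β.comp α) x
  map_mul : ∀ {m n : ℕ} (θ : Fin (m+1) →o Fin (n+1)) (x y : obj n),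
    map θ (x * y) = map θ x * map θ y

attribute [instance] SGrp.grp

namespace SGrp

/-- face `d_k : G_N → G_{N-1}` -/
def face (G : SGrp) (k : ℕ) {N : ℕ} : G.obj N → G.obj (N-1) := G.map (δOH k (N-1) N)

/-- degeneracy `s_k : G_M → G_{M+1}` -/
def deg (G : SGrp) (k : ℕ) {M : ℕ} : G.obj M → G.obj (M+1) := G.map (σOH k (M+1) M)

/-- transport between levels (junk value `1` when levels differ). -/
def gcast (G : SGrp) {a : ℕ} (b : ℕ) (x : G.obj a) : G.obj b := if h : a = b then h ▸ x else 1

/-- descending composite of faces `d_{i+c} d_{i+c-1} ⋯ d_{i+1}`. -/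
def dcomp (G : SGrp) : (i c : ℕ) → {N : ℕ} → G.obj N → G.obj (N - c)
  | _, 0, _, x => x
  | i, c+1, _, x => G.face (i+1) (G.dcomp (i+1) c x)

/-- ascending composite of degeneracies `s_i s_{i+1} ⋯ s_{i+c-1}`. -/
def scomp (G : SGrp) : (i c : ℕ) → {M : ℕ} → G.obj M → G.obj (M + c)
  | _, 0, _, x => x
  | i, c+1, _, x => G.deg (i+c) (G.scomp i c x)

/-- `x ↦ x d_j ⋯ d_{i+1} s_i ⋯ s_{j-1}`, an endomap of `G_N`. -/
def ds (G : SGrp) (i j : ℕ) {N : ℕ} (x : G.obj N) : G.obj N :=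
  G.gcast N (G.scomp i (min (j - i) N) (G.dcomp i (min (j - i) N) x))

/-- `x ↦ x d_j ⋯ d_{i+1} s_i ⋯ s_{n-1} : G_j → G_n`. -/
def dsTo (G : SGrp) (i n : ℕ) {j : ℕ} (x : G.obj j) : G.obj n :=
  G.gcast n (G.scomp i (n - i) (G.gcast i (G.dcomp i (j - i) x)))

/-- the `y_i` of the section `S_G`, defined by descending recursion (with fuel). -/
def yAux (G : SGrp) (n : ℕ) (g : ∀ j : ℕ, G.obj j) : ℕ → ℕ → G.obj n
  | 0, _ => 1
  | fuel+1, i =>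
      aProd (fun j => G.ds i j (G.yAux n g fuel j)⁻¹) (i+1) n *
      dProd (fun j => G.dsTo i n (g j)) i n

/-- `W̄_n G = ∏_{j = n-1}^{0} G_j`. -/
def WbarN (G : SGrp) (n : ℕ) : Type := ∀ j : Fin n, G.obj (j:ℕ)

/-- extension of a tuple in `W̄_n G` by `1`. -/
def gE (G : SGrp) {n : ℕ} (g : G.WbarN n) : ∀ j : ℕ, G.obj j :=
  fun j => if h : j < n then g ⟨j, h⟩ else 1

/-- the coretraction `(S_G)_n : W̄_n G → Diag_n NG = (G_n)^n`. -/
def SGn (G : SGrp) (n : ℕ) (g : G.WbarN n) : Fin n → G.obj n :=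
  fun i => G.yAux n (G.gE g) n (i:ℕ)

/-- extension of a tuple in `(G_n)^n` by `1`. -/
def xE (G : SGrp) {n : ℕ} (x : Fin n → G.obj n) : ℕ → G.obj n :=
  fun j => if h : j < n then x ⟨j, h⟩ else 1

/-- the structure map `W̄_θ : W̄_n G → W̄_m G` of the Kan classifying simplicial set. -/
def wbarMap (G : SGrp) {m n : ℕ} (θ : Fin (m+1) →o Fin (n+1)) (g : G.WbarN n) : G.WbarN m :=
  fun i => dProd (fun j => G.map (restrictOH θ (i:ℕ) j) (G.gE g j))
    ((θ i.castSucc : Fin (n+1)) : ℕ) ((θ i.succ : Fin (n+1)) : ℕ)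

/-- the structure map `(Diag NG)_θ : (G_n)^n → (G_m)^m` of the diagonal of the nerve. -/
def diagMap (G : SGrp) {m n : ℕ} (θ : Fin (m+1) →o Fin (n+1)) (x : Fin n → G.obj n) :
    Fin m → G.obj m :=
  fun i => dProd (fun j => G.map θ (G.xE x j))
    ((θ i.castSucc : Fin (n+1)) : ℕ) ((θ i.succ : Fin (n+1)) : ℕ)

/-- the retraction `(D_G)_n : Diag_n NG → W̄_n G`, `(g_i)_i ↦ (g_i d_n ⋯ d_{i+1})_i`. -/
def DGn (G : SGrp) (n : ℕ) (x : Fin n → G.obj n) : G.WbarN n :=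
  fun i => G.gcast (i:ℕ) (G.dcomp (i:ℕ) (n - (i:ℕ)) (x i))

/-- the components `y_i^{(n+1-k)}` of the homotopy `H`, by descending recursion (with fuel). -/
def hAux (G : SGrp) (n k : ℕ) (g : ℕ → G.obj n) : ℕ → ℕ → G.obj n
  | 0, _ => 1
  | fuel+1, i =>
      if k ≤ i + 1 then g i
      else
        aProd (fun j => G.ds i j (G.hAux n k g fuel j)⁻¹) (i+1) (k-1) *
        dProd (fun j => G.ds i (k-1) (g j)) i (k-1)

end SGrp

/-- recover `k` from the simplex `τ^{n+1-k} ∈ Δ^1_n`: the number of vertices sent to `0`. -/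
def kOf {n : ℕ} (t : Fin (n+1) →o Fin 2) : ℕ :=
  (Finset.univ.filter (fun i => t i = 0)).card

namespace SGrp

/-- the homotopy `H_n : Diag_n NG × Δ^1_n → Diag_n NG`. -/
def Hn (G : SGrp) (n : ℕ) (x : Fin n → G.obj n) (t : Fin (n+1) →o Fin 2) : Fin n → G.obj n :=
  fun i => G.hAux n (kOf t) (G.xE x) (n+1) (i:ℕ)

end SGrp

/-- morphisms of simplicial groups. -/
structure SGrpHom (G G' : SGrp) where
  app : ∀ n, G.obj n → G'.obj n
  comm : ∀ {m n : ℕ} (θ : Fin (m+1) →o Fin (n+1)) (x : G.obj n),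
    app m (G.map θ x) = G'.map θ (app n x)
  mul : ∀ (n : ℕ) (x y : G.obj n), app n (x * y) = app n x * app n y

end Paper
namespace Paper

/-- clamped inclusion `[i] → [n]`. -/
def ιOH (i n : ℕ) : Fin (i+1) →o Fin (n+1) where
  toFun k := ⟨min (k:ℕ) n, Nat.lt_succ_of_le (Nat.min_le_right _ _)⟩
  monotone' := by
    intro a b hab
    have h : (a:ℕ) ≤ (b:ℕ) := hab
    simp only [Fin.mk_le_mk]; omega

/-- composite of faces as an order hom. -/
def dOH (i c N : ℕ) : Fin (N-c+1) →o Fin (N+1) where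
  toFun k := ⟨min (if (k:ℕ) ≤ i then (k:ℕ) else (k:ℕ)+c) N, Nat.lt_succ_of_le (Nat.min_le_right _ _)⟩
  monotone' := by
    intro a b hab
    have h : (a:ℕ) ≤ (b:ℕ) := hab
    simp only [Fin.mk_le_mk]; split_ifs <;> omega

/-- composite of degeneracies as an order hom. -/
def sOH (i c M : ℕ) : Fin (M+c+1) →o Fin (M+1) where
  toFun k := ⟨min (if (k:ℕ) ≤ i then (k:ℕ) else max i ((k:ℕ)-c)) M, Nat.lt_succ_of_le (Nat.min_le_right _ _)⟩
  monotone' := by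
    intro a b hab
    have h : (a:ℕ) ≤ (b:ℕ) := hab
    simp only [Fin.mk_le_mk]; split_ifs <;> omega

/-- the map collapsing `[i,j]` to `i`, as an order hom. -/
def eOH (i j n : ℕ) : Fin (n+1) →o Fin (n+1) where
  toFun k := ⟨min (if (k:ℕ) ≤ i then (k:ℕ) else if (k:ℕ) ≤ j then i else (k:ℕ)) n, Nat.lt_succ_of_le (Nat.min_le_right _ _)⟩
  monotone' := by
    intro a b hab
    have h : (a:ℕ) ≤ (b:ℕ) := hab
    simp only [Fin.mk_le_mk]; split_ifs <;> omega

/-- `k ↦ min k i : [n] → [j]`, clamped. -/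
def μOH (i n j : ℕ) : Fin (n+1) →o Fin (j+1) where
  toFun k := ⟨min (min (k:ℕ) i) j, Nat.lt_succ_of_le (Nat.min_le_right _ _)⟩
  monotone' := by
    intro a b hab
    have h : (a:ℕ) ≤ (b:ℕ) := hab
    simp only [Fin.mk_le_mk]; omega

namespace SGrp

variable (G : SGrp)

theorem map_one {m n : ℕ} (θ : Fin (m+1) →o Fin (n+1)) : G.map θ 1 = 1 := by
  have h := G.map_mul θ 1 1
  rw [one_mul] at h
  exact (mul_eq_left.mp h.symm)

theorem map_inv {m n : ℕ} (θ : Fin (m+1) →o Fin (n+1)) (x : G.obj n) :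
    G.map θ x⁻¹ = (G.map θ x)⁻¹ :=
  eq_inv_of_mul_eq_one_left (by rw [← G.map_mul, inv_mul_cancel, G.map_one])

theorem gcast_self {a : ℕ} (x : G.obj a) : G.gcast a x = x := by
  simp [gcast]

theorem map_congr_level {a b n : ℕ} (h : a = b) (θ : Fin (a+1) →o Fin (n+1))
    (θ' : Fin (b+1) →o Fin (n+1)) (hp : ∀ k : ℕ, fApp θ k = fApp θ' k) (x : G.obj n) :
    G.gcast b (G.map θ x) = G.map θ' x := by
  subst h
  rw [G.gcast_self]
  congr 1
  ext p
  have h1 := fApp_coe θ p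
  have h2 := fApp_coe θ' p
  have := hp (p : ℕ)
  omega

end SGrp
end Paper
namespace Paper
namespace SGrp

variable (G : SGrp)

theorem map_eq_self {N : ℕ} (θ : Fin (N+1) →o Fin (N+1))
    (hθ : ∀ k : Fin (N+1), ((θ k : Fin (N+1)) : ℕ) = (k : ℕ)) (x : G.obj N) :
    G.map θ x = x := by
  have : θ = OrderHom.id := by
    ext k
    rw [hθ k]
    rfl
  rw [this, G.map_id]

theorem dcomp_eq : ∀ (c i N : ℕ), i + c ≤ N → ∀ x : G.obj N,
    G.dcomp i c x = G.map (dOH i c N) x := by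
  intro c
  induction c with
  | zero =>
    intro i N _ x
    show x = G.map (dOH i 0 N) x
    refine (G.map_eq_self (dOH i 0 N) ?_ x).symm
    intro k
    have := k.isLt
    show ((dOH i 0 N k : Fin (N+1)) : ℕ) = (k : ℕ)
    simp only [dOH, OrderHom.coe_mk, DFunLike.coe]
    split_ifs <;> omega
  | succ c ih =>
    intro i N h x
    show G.face (i+1) (G.dcomp (i+1) c x) = _
    rw [ih (i+1) N (by omega) x]
    show G.map (δOH (i+1) (N-c-1) (N-c)) (G.map (dOH (i+1) c N) x) = _
    rw [G.map_comp]
    congr 1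
    ext k
    have hk := k.isLt
    simp only [dOH, δOH, OrderHom.comp_coe, OrderHom.coe_mk, Function.comp_apply, DFunLike.coe, OrderHom.comp]
    split_ifs <;> omega

theorem scomp_eq : ∀ (c i M : ℕ), i ≤ M → ∀ x : G.obj M,
    G.scomp i c x = G.map (sOH i c M) x := by
  intro c
  induction c with
  | zero =>
    intro i M hiM x
    show x = G.map (sOH i 0 M) x
    refine (G.map_eq_self (sOH i 0 M) ?_ x).symm
    intro k
    have := k.isLt
    show ((sOH i 0 M k : Fin (M+1)) : ℕ) = (k : ℕ)
    simp only [sOH, OrderHom.coe_mk, DFunLike.coe]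
    split_ifs <;> omega
  | succ c ih =>
    intro i M hiM x
    show G.deg (i+c) (G.scomp i c x) = _
    rw [ih i M hiM x]
    show G.map (σOH (i+c) (M+c+1) (M+c)) (G.map (sOH i c M) x) = _
    rw [G.map_comp]
    congr 1
    ext k
    have hk := k.isLt
    simp only [sOH, σOH, OrderHom.comp_coe, OrderHom.coe_mk, Function.comp_apply, DFunLike.coe, OrderHom.comp]
    split_ifs <;> omega

theorem ds_eq {i j n : ℕ} (hij : i ≤ j) (hjn : j ≤ n) (x : G.obj n) :
    G.ds i j x = G.map (eOH i j n) x := by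
  unfold ds
  rw [show min (j - i) n = j - i from by omega]
  rw [G.dcomp_eq (j-i) i n (by omega) x]
  rw [G.scomp_eq (j-i) i (n-(j-i)) (by omega)]
  rw [G.map_comp]
  refine G.map_congr_level (by omega) _ _ ?_ x
  intro k
  simp only [fApp, dOH, sOH, eOH, OrderHom.comp_coe, OrderHom.coe_mk, Function.comp_apply, DFunLike.coe, OrderHom.comp]
  split_ifs <;> omega

theorem dsTo_eq {i j n : ℕ} (hij : i ≤ j) (hin : i ≤ n) (x : G.obj j) :
    G.dsTo i n x = G.map (μOH i n j) x := by
  unfold dsTo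
  rw [G.dcomp_eq (j-i) i j (by omega) x]
  rw [G.map_congr_level (a := j - (j-i)) (by omega) _ (ιOH i j) (by
    intro k
    simp only [fApp, dOH, ιOH, OrderHom.coe_mk, DFunLike.coe]
    split_ifs <;> omega) x]
  rw [G.scomp_eq (n-i) i i (le_refl i)]
  rw [G.map_comp]
  refine G.map_congr_level (by omega) _ _ ?_ x
  intro k
  simp only [fApp, sOH, ιOH, μOH, OrderHom.comp_coe, OrderHom.coe_mk, Function.comp_apply, DFunLike.coe, OrderHom.comp]
  split_ifs <;> omega

theorem eOH_comp (i j n : ℕ) : (eOH i j n).comp (ιOH i n) = ιOH i n := by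
  ext k
  have hk := k.isLt
  simp only [eOH, ιOH, OrderHom.comp_coe, OrderHom.coe_mk, Function.comp_apply, DFunLike.coe, OrderHom.comp]
  split_ifs <;> omega

theorem μOH_comp (i j n : ℕ) (hin : i ≤ n) : (μOH i n j).comp (ιOH i n) = ιOH i j := by
  ext k
  have hk := k.isLt
  simp only [μOH, ιOH, OrderHom.comp_coe, OrderHom.coe_mk, Function.comp_apply, DFunLike.coe, OrderHom.comp]
  omega

theorem ιOH_comp (i j n : ℕ) (hij : i ≤ j) : (ιOH j n).comp (ιOH i j) = ιOH i n := by
  ext k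
  have hk := k.isLt
  simp only [ιOH, OrderHom.comp_coe, OrderHom.coe_mk, Function.comp_apply, DFunLike.coe, OrderHom.comp]
  omega

theorem ιOH_self (i : ℕ) : ιOH i i = OrderHom.id := by
  ext k
  have hk := k.isLt
  simp only [ιOH, OrderHom.coe_mk, OrderHom.id_coe, id_eq, DFunLike.coe, OrderHom.id]
  omega

end SGrp

section Prods
variable {γ : Type*} [Monoid γ]

theorem aProd_congr (f f' : ℕ → γ) (a : ℕ) : ∀ b, (∀ j, a ≤ j → j < b → f j = f' j) →
    aProd f a b = aProd f' a b := by
  intro b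
  induction b with
  | zero => intro _; rfl
  | succ b ih =>
    intro h
    show (if a ≤ b then aProd f a b * f b else 1) = (if a ≤ b then aProd f' a b * f' b else 1)
    split_ifs with hab
    · rw [ih (fun j hj hj' => h j hj (by omega)), h b hab (by omega)]
    · rfl

theorem dProd_congr (f f' : ℕ → γ) (a : ℕ) : ∀ b, (∀ j, a ≤ j → j < b → f j = f' j) →
    dProd f a b = dProd f' a b := by
  intro b
  induction b with
  | zero => intro _; rfl
  | succ b ih =>
    intro h
    show (if a ≤ b then f b * dProd f a b else 1) = (if a ≤ b then f' b * dProd f' a b else 1)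
    split_ifs with hab
    · rw [ih (fun j hj hj' => h j hj (by omega)), h b hab (by omega)]
    · rfl

theorem dProd_same (f : ℕ → γ) (a : ℕ) : dProd f a a = 1 := by
  cases a with
  | zero => rfl
  | succ a =>
    show (if a+1 ≤ a then _ else 1) = 1
    rw [if_neg (by omega)]

theorem tele {δ : Type*} [Group δ] (t : ℕ → δ) (i : ℕ) : ∀ n, i < n →
    aProd (fun j => (t j)⁻¹) (i+1) n * dProd t i n = t i := by
  intro n
  induction n with
  | zero => omega
  | succ n ih =>
    intro h
    show (if i+1 ≤ n then aProd (fun j => (t j)⁻¹) (i+1) n * (t n)⁻¹ else 1) *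
      (if i ≤ n then t n * dProd t i n else 1) = t i
    by_cases hin : i < n
    · rw [if_pos (show i + 1 ≤ n by omega), if_pos (show i ≤ n by omega)]
      calc aProd (fun j => (t j)⁻¹) (i+1) n * (t n)⁻¹ * (t n * dProd t i n)
          = aProd (fun j => (t j)⁻¹) (i+1) n * ((t n)⁻¹ * t n) * dProd t i n := by
            rw [mul_assoc, mul_assoc, mul_assoc]
        _ = aProd (fun j => (t j)⁻¹) (i+1) n * dProd t i n := by
            rw [inv_mul_cancel, mul_one]
        _ = t i := ih hin
    · have hi : i = n := by omega
      subst hi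
      rw [if_neg (show ¬ (i + 1 ≤ i) by omega), if_pos (le_refl i), dProd_same, mul_one, one_mul]

end Prods

namespace SGrp
variable (G : SGrp)

theorem map_aProd {m n : ℕ} (θ : Fin (m+1) →o Fin (n+1)) (f : ℕ → G.obj n) (a : ℕ) :
    ∀ b, G.map θ (aProd f a b) = aProd (fun j => G.map θ (f j)) a b := by
  intro b
  induction b with
  | zero => exact G.map_one θ
  | succ b ih =>
    show G.map θ (if a ≤ b then aProd f a b * f b else 1) = (if a ≤ b then _ * _ else 1)
    split_ifs with hab
    · rw [G.map_mul, ih]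
    · exact G.map_one θ

theorem map_dProd {m n : ℕ} (θ : Fin (m+1) →o Fin (n+1)) (f : ℕ → G.obj n) (a : ℕ) :
    ∀ b, G.map θ (dProd f a b) = dProd (fun j => G.map θ (f j)) a b := by
  intro b
  induction b with
  | zero => exact G.map_one θ
  | succ b ih =>
    show G.map θ (if a ≤ b then f b * dProd f a b else 1) = (if a ≤ b then _ * _ else 1)
    split_ifs with hab
    · rw [G.map_mul, ih]
    · exact G.map_one θ

theorem yAux_section (n : ℕ) (g : G.WbarN n) :
    ∀ fuel i, i < n → n ≤ fuel + i →
      G.map (ιOH i n) (G.yAux n (G.gE g) fuel i) = G.gE g i := by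
  intro fuel
  induction fuel with
  | zero => omega
  | succ fuel ih =>
    intro i hi hf
    show G.map (ιOH i n) (aProd (fun j => G.ds i j (G.yAux n (G.gE g) fuel j)⁻¹) (i+1) n *
      dProd (fun j => G.dsTo i n (G.gE g j)) i n) = _
    rw [G.map_mul, G.map_aProd, G.map_dProd]
    rw [aProd_congr _ (fun j => (G.map (ιOH i j) (G.gE g j))⁻¹) (i+1) n (by
      intro j hj hjn
      show G.map (ιOH i n) (G.ds i j (G.yAux n (G.gE g) fuel j)⁻¹) = _
      rw [G.ds_eq (by omega) (by omega), G.map_comp, eOH_comp, G.map_inv,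
        ← ιOH_comp i j n (by omega), ← G.map_comp, ih j hjn (by omega)])]
    rw [dProd_congr _ (fun j => G.map (ιOH i j) (G.gE g j)) i n (by
      intro j hj hjn
      show G.map (ιOH i n) (G.dsTo i n (G.gE g j)) = _
      rw [G.dsTo_eq (by omega) (by omega), G.map_comp, μOH_comp i j n (by omega)])]
    exact (tele (fun j => G.map (ιOH i j) (G.gE g j)) i n hi).trans
      (by simp only [ιOH_self, G.map_id])

end SGrp
end Paper

open Paper Paper.SGrp in
/-- `S_G` is a section of `D_G`, i.e. `(S_G)_n (D_G)_n = id` for all `n`;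
in particular `D_G` is a retraction. -/
theorem stmt_10 (G : SGrp) (n : ℕ) (g : G.WbarN n) : G.DGn n (G.SGn n g) = g := by
  funext i
  show G.gcast (i:ℕ) (G.dcomp (i:ℕ) (n - (i:ℕ)) (G.yAux n (G.gE g) n (i:ℕ))) = g i
  rw [G.dcomp_eq (n - (i:ℕ)) (i:ℕ) n (by have := i.isLt; omega)]
  rw [G.map_congr_level (a := n - (n - (i:ℕ))) (by have := i.isLt; omega) _ (ιOH (i:ℕ) n) (by
    intro k
    simp only [fApp, dOH, ιOH, OrderHom.coe_mk, DFunLike.coe]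
    have := i.isLt
    split_ifs <;> omega)]
  rw [G.yAux_section n g n (i:ℕ) i.isLt (by have := i.isLt; omega)]
  show (if h : (i:ℕ) < n then g ⟨(i:ℕ), h⟩ else 1) = g i
  rw [dif_pos i.isLt]
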